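/- Let V be a real inner product space and let f : V → V be nonexpansive with respect to the induced norm. Then: (a) every fixed point x of f satisfies ⟨x, w − f(w)⟩ ≤ ⟨w, w − f(w)⟩ for every w ∈ V; in particular Fix(f) ⊆ ⋂_{w ∈ V} H_w, where H_w = {v ∈ V : ⟨v, w − f(w)⟩ ≤ ⟨w, w − f(w)⟩}. (b) If moreover V is finite dimensional and there exist w₁, …, w_m ∈ V such that {f(w_i) − w_i : i = 1, …, m} illuminates the closed unit ball of V, then ⋂_{i=1}^m H_{w_i} is compact. -/

import Mathlib

open Metric Set

/-- (a) Every fixed point `x` of a nonexpansive map `f` on a real inner ℝ product space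
satisfies `⟨x, w - f w⟩ ≤ ⟨w, w - f w⟩` for every `w`; in particular the fixed point set
is contained in the intersection of the half-spaces `H_w`. (b) If moreover `V` is finite
dimensional and `{f(wᵢ) - wᵢ : i = 1, …, m}` illuminates the closed unit ball, then
`⋂ᵢ H_{wᵢ}` is compact. -/
theorem stmt18 {V : Type*} [NormedAddCommGroup V] [InnerProductSpace ℝ V]
    (f : V → V) (hf : ∀ x y : V, ‖f x - f y‖ ≤ ‖x - y‖) :
    (∀ x : V, f x = x → ∀ w : V,
      (inner ℝ x (w - f w) : ℝ) ≤ (inner ℝ w (w - f w) : ℝ)) ∧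
    (FiniteDimensional ℝ V → ∀ (m : ℕ) (w : Fin m → V),
      (∀ x ∈ frontier (Metric.closedBall (0 : V) 1), ∃ (i : Fin m) (l : ℝ), 0 < l ∧
        x + l • (f (w i) - w i) ∈ interior (Metric.closedBall (0 : V) 1)) →
      IsCompact (⋂ i : Fin m,
        {v : V | (inner ℝ v (w i - f (w i)) : ℝ) ≤ (inner ℝ (w i) (w i - f (w i)) : ℝ)})) := by
  constructor
  · intro x hx w
    have h := hf w x
    rw [hx] at h
    have h2 : ‖f w - x‖ ^ 2 ≤ ‖w - x‖ ^ 2 := by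
      have := norm_nonneg (f w - x)
      nlinarith
    have e1 : ‖f w - x‖ ^ 2 = ‖f w‖ ^ 2 - 2 * inner ℝ (f w) x + ‖x‖ ^ 2 :=
      norm_sub_sq_real (f w) x
    have e2 : ‖w - x‖ ^ 2 = ‖w‖ ^ 2 - 2 * inner ℝ w x + ‖x‖ ^ 2 :=
      norm_sub_sq_real w x
    have e3 : ‖w - f w‖ ^ 2 = ‖w‖ ^ 2 - 2 * inner ℝ w (f w) + ‖f w‖ ^ 2 :=
      norm_sub_sq_real w (f w)
    have e4 : (inner ℝ x (w - f w) : ℝ) = inner ℝ x w - inner ℝ x (f w) := inner_sub_right _ _ _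
    have e5 : (inner ℝ w (w - f w) : ℝ) = inner ℝ w w - inner ℝ w (f w) := inner_sub_right _ _ _
    have e6 : (inner ℝ w w : ℝ) = ‖w‖ ^ 2 := real_inner_self_eq_norm_sq w
    have e7 : (inner ℝ (f w) x : ℝ) = inner ℝ x (f w) := real_inner_comm _ _
    have e8 : (inner ℝ w x : ℝ) = inner ℝ x w := real_inner_comm _ _
    have e9 : (0 : ℝ) ≤ ‖w - f w‖ ^ 2 := sq_nonneg _
    nlinarith
  · intro _ m w hill
    rw [Metric.isCompact_iff_isClosed_bounded]
    refine ⟨isClosed_iInter fun i =>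
        isClosed_le (Continuous.inner continuous_id continuous_const) continuous_const, ?_⟩
    rcases subsingleton_or_nontrivial V with hV | hV
    · exact (Set.toFinite _).isBounded
    · have hfr : frontier (Metric.closedBall (0 : V) 1) = sphere (0 : V) 1 :=
        frontier_closedBall 0 one_ne_zero
      have hint : interior (Metric.closedBall (0 : V) 1) = ball (0 : V) 1 :=
        interior_closedBall 0 one_ne_zero
      obtain ⟨x₀, hx₀⟩ := exists_norm_eq V (zero_le_one)
      have hx₀s : x₀ ∈ sphere (0 : V) 1 := by simpa [mem_sphere_iff_norm] using hx₀
      have hm : Nonempty (Fin m) := by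
        obtain ⟨i, _⟩ := hill x₀ (hfr ▸ hx₀s)
        exact ⟨i⟩
      have hmne : (Finset.univ : Finset (Fin m)).Nonempty := Finset.univ_nonempty
      -- key pointwise positivity on the sphere
      have key : ∀ u ∈ sphere (0 : V) 1, ∃ i, (0:ℝ) < inner ℝ u (w i - f (w i)) := by
        intro u hu
        obtain ⟨i, l, hl, hmem⟩ := hill u (hfr ▸ hu)
        rw [hint, mem_ball, dist_zero_right] at hmem
        refine ⟨i, ?_⟩
        have hnu : ‖u‖ = 1 := by simpa [mem_sphere_iff_norm] using hu
        have hsq : ‖u + l • (f (w i) - w i)‖ ^ 2 < 1 := by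
          nlinarith [norm_nonneg (u + l • (f (w i) - w i))]
        have e1 : ‖u + l • (f (w i) - w i)‖ ^ 2
            = ‖u‖ ^ 2 + 2 * inner ℝ u (l • (f (w i) - w i)) + ‖l • (f (w i) - w i)‖ ^ 2 :=
          norm_add_sq_real u _
        have e2 : (inner ℝ u (l • (f (w i) - w i)) : ℝ) = l * inner ℝ u (f (w i) - w i) :=
          real_inner_smul_right u _ l
        have e3 : (inner ℝ u (f (w i) - w i) : ℝ) = - inner ℝ u (w i - f (w i)) := by
          rw [← inner_neg_right, neg_sub]
        have e4 : (0:ℝ) ≤ ‖l • (f (w i) - w i)‖ ^ 2 := sq_nonneg _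
        nlinarith
      -- min over sphere of max over i
      set g : V → ℝ := fun u =>
        Finset.univ.sup' hmne (fun i => (inner ℝ u (w i - f (w i)) : ℝ)) with hg
      have hgc : Continuous g := by
        apply Continuous.finset_sup'_apply hmne
        intro i _
        exact Continuous.inner continuous_id continuous_const
      obtain ⟨u₀, hu₀s, hu₀min'⟩ := (isCompact_sphere (0:V) 1).exists_isMinOn
        ⟨x₀, hx₀s⟩ hgc.continuousOn
      have hu₀min : ∀ u ∈ sphere (0:V) 1, g u₀ ≤ g u := fun u hu => hu₀min' hu
      have hε : 0 < g u₀ := by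
        obtain ⟨i, hi⟩ := key u₀ hu₀s
        refine hi.trans_le ?_
        show (fun j => (inner ℝ u₀ (w j - f (w j)) : ℝ)) i ≤ _
        rw [hg]
        exact Finset.le_sup' (fun j => (inner ℝ u₀ (w j - f (w j)) : ℝ)) (Finset.mem_univ i)
      set C : ℝ := Finset.univ.sup' hmne (fun i => (inner ℝ (w i) (w i - f (w i)) : ℝ)) with hC
      rw [isBounded_iff_forall_norm_le]
      refine ⟨max (C / g u₀) 0, ?_⟩
      intro v hv
      rcases eq_or_ne v 0 with rfl | hv0
      · simp
      · have hnv : 0 < ‖v‖ := norm_pos_iff.mpr hv0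
        set u : V := ‖v‖⁻¹ • v with hu
        have hus : u ∈ sphere (0:V) 1 := by
          simp [hu, mem_sphere_iff_norm, norm_smul, abs_of_pos (inv_pos.mpr hnv),
            inv_mul_cancel₀ hnv.ne']
        have h1 : g u₀ ≤ g u := hu₀min u hus
        obtain ⟨i, _, hi⟩ := Finset.exists_mem_eq_sup' hmne
          (fun i => (inner ℝ u (w i - f (w i)) : ℝ))
        have h2 : g u = inner ℝ u (w i - f (w i)) := hi
        have h3 : (inner ℝ u (w i - f (w i)) : ℝ) = ‖v‖⁻¹ * inner ℝ v (w i - f (w i)) :=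
          real_inner_smul_left v _ _
        have h4 : (inner ℝ v (w i - f (w i)) : ℝ) ≤ inner ℝ (w i) (w i - f (w i)) := by
          have := Set.mem_iInter.mp hv i
          exact this
        have h5 : (inner ℝ (w i) (w i - f (w i)) : ℝ) ≤ C := by
          show (fun j => (inner ℝ (w j) (w j - f (w j)) : ℝ)) i ≤ _
          rw [hC]
          exact Finset.le_sup' (fun j => (inner ℝ (w j) (w j - f (w j)) : ℝ)) (Finset.mem_univ i)
        have h6 : g u₀ * ‖v‖ ≤ C := by
          have : g u₀ ≤ ‖v‖⁻¹ * C := by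
            calc g u₀ ≤ g u := h1
            _ = ‖v‖⁻¹ * inner ℝ v (w i - f (w i)) := by rw [h2, h3]
            _ ≤ ‖v‖⁻¹ * C := by
                exact mul_le_mul_of_nonneg_left (h4.trans h5) (inv_nonneg.mpr hnv.le)
          calc g u₀ * ‖v‖ ≤ (‖v‖⁻¹ * C) * ‖v‖ := by nlinarith
          _ = C := by field_simp
        have : ‖v‖ ≤ C / g u₀ := (le_div_iff₀ hε).mpr (by linarith [h6])
        exact this.trans (le_max_left _ _)
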